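/- Suppose two investors have wealths a₁, a₂ > 0 and heterogeneous returns r₁, r₂ > −1 with r₁ ≠ r₂, and let the capital income tax rate satisfy τ_k ≠ 0. Then there exists no single wealth tax rate τ_a such that, simultaneously for both investors, (1 − τ_a)·(1 + rᵢ)·aᵢ = aᵢ + (1 − τ_k)·rᵢ·aᵢ (i = 1, 2). The equivalence between the capital income tax and the wealth tax breaks under heterogeneous returns. -/
import Mathlib


/-- Under heterogeneous returns `r₁ ≠ r₂` and a nonzero capital income tax rate
`τ_k`, no single wealth tax rate `τ_a` replicates the capital income tax for
both investors simultaneously. -/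
theorem no_common_wealth_tax_rate_under_heterogeneous_returns
    (a₁ a₂ r₁ r₂ τk : ℝ) (ha₁ : 0 < a₁) (ha₂ : 0 < a₂)
    (hr₁ : -1 < r₁) (hr₂ : -1 < r₂) (hne : r₁ ≠ r₂) (hτk : τk ≠ 0) :
    ¬ ∃ τa : ℝ,
      (1 - τa) * (1 + r₁) * a₁ = a₁ + (1 - τk) * r₁ * a₁ ∧
      (1 - τa) * (1 + r₂) * a₂ = a₂ + (1 - τk) * r₂ * a₂ := by
  rintro ⟨τa, h1, h2⟩
  have e1 : (1 - τa) * (1 + r₁) = 1 + (1 - τk) * r₁ := by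
    have := mul_right_cancel₀ (ne_of_gt ha₁) (by linarith [h1] : (1 - τa) * (1 + r₁) * a₁ = (1 + (1 - τk) * r₁) * a₁)
    exact this
  have e2 : (1 - τa) * (1 + r₂) = 1 + (1 - τk) * r₂ := by
    have := mul_right_cancel₀ (ne_of_gt ha₂) (by linarith [h2] : (1 - τa) * (1 + r₂) * a₂ = (1 + (1 - τk) * r₂) * a₂)
    exact this
  have hd : (τk - τa) * (r₁ - r₂) = 0 := by ring_nf; nlinarith [e1, e2]
  have hτ : τa = τk := by
    rcases mul_eq_zero.1 hd with h | h
    · linarith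
    · exact absurd (by linarith : r₁ = r₂) hne
  subst hτ
  have : τa * (1 + r₁) = τa * r₁ := by nlinarith [e1]
  have : τa = 0 := by nlinarith [this]
  exact hτk this
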